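/- Lower semicontinuity of the mean–semideviation dual set: let (X, ℬ, P₀) be a probability space, p ∈ [1,∞), and let m and m_k (k = 1, 2, …) be probability measures on X, absolutely continuous with respect to P₀ with densities in L^q(P₀), such that m_k → m in the weak* sense, i.e., ∫ v dm_k → ∫ v dm for every v ∈ L^p(P₀). Let h be a measurable function with 0 ≤ h ≤ κ for some κ ∈ [0,1], and define the probability measures μ and μ_k by the densities dμ/dm = 1 + h − ∫ h dm and dμ_k/dm_k = 1 + h − ∫ h dm_k. Then for every v ∈ L^p(P₀), lim_{k→∞} ∫ v dμ_k = ∫ v dμ; i.e., μ_k → μ in the weak* sense. In particular, every element of the mean–semideviation dual set A(m) = { μ : dμ/dm = 1 + h − ∫ h dm, 0 ≤ h ≤ κ } is the weak* limit of elements μ_k ∈ A(m_k), so the multifunction m ↦ A(m) is lower semicontinuous. -/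

import Mathlib

open MeasureTheory Filter Topology
open scoped ENNReal
open scoped NNReal

/-- **Lower semicontinuity of the mean–semideviation dual set.**
Let `P₀` be a reference probability measure, `p ∈ [1,∞)` with conjugate `q`, and let
`m_k → m` weak* (tested against all `v ∈ L^p(P₀)`), where `m` and all `m_k` are probability
measures absolutely continuous with respect to `P₀` with densities in `L^q(P₀)`. If
`0 ≤ h ≤ κ ≤ 1` is measurable and `μ`, `μ_k` are defined by the densities
`dμ/dm = 1 + h − ∫ h dm` and `dμ_k/dm_k = 1 + h − ∫ h dm_k`, then `μ_k → μ` weak*: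
`∫ v dμ_k → ∫ v dμ` for every `v ∈ L^p(P₀)`. Hence the mean–semideviation dual
multifunction `m ↦ A(m)` is lower semicontinuous. -/
theorem mean_semideviation_dual_set_lsc
    {X : Type*} [MeasurableSpace X] (P₀ : Measure X) [IsProbabilityMeasure P₀]
    (p q : ℝ≥0∞) (hp : 1 ≤ p) (hptop : p ≠ ⊤) (hpq : 1 / p + 1 / q = 1)
    (m : Measure X) (ms : ℕ → Measure X)
    [IsProbabilityMeasure m] (hms : ∀ k, IsProbabilityMeasure (ms k))
    (hac : m ≪ P₀) (hacs : ∀ k, ms k ≪ P₀)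
    (hd : MemLp (fun x => (m.rnDeriv P₀ x).toReal) q P₀)
    (hds : ∀ k, MemLp (fun x => ((ms k).rnDeriv P₀ x).toReal) q P₀)
    (hconv : ∀ v : X → ℝ, MemLp v p P₀ →
      Tendsto (fun k => ∫ x, v x ∂(ms k)) atTop (𝓝 (∫ x, v x ∂m)))
    (κ : ℝ) (hκ0 : 0 ≤ κ) (hκ1 : κ ≤ 1)
    (h : X → ℝ) (hhm : Measurable h) (hh : ∀ x, 0 ≤ h x ∧ h x ≤ κ) :
    ∀ v : X → ℝ, MemLp v p P₀ →
      Tendsto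
        (fun k => ∫ x, v x ∂((ms k).withDensity
          fun x => ENNReal.ofReal (1 + h x - ∫ y, h y ∂(ms k)))) atTop
        (𝓝 (∫ x, v x ∂(m.withDensity
          fun x => ENNReal.ofReal (1 + h x - ∫ y, h y ∂m)))) := by
  intro v hv
  -- integrability transfer: L^p(P₀) functions are integrable w.r.t. measures with L^q density
  have key_int : ∀ (ν : Measure X), IsFiniteMeasure ν → ν ≪ P₀ →
      MemLp (fun x => (ν.rnDeriv P₀ x).toReal) q P₀ →
      ∀ w : X → ℝ, MemLp w p P₀ → Integrable w ν := by
    intro ν hνF hν hνd w hw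
    haveI := hνF
    rw [← integrable_rnDeriv_smul_iff hν]
    have hm1 : MemLp (fun x => (ν.rnDeriv P₀ x).toReal • w x) 1 P₀ := by
      exact hw.smul hνd (hpqr := ⟨by rw [add_comm q⁻¹ p⁻¹]; simpa [one_div] using hpq⟩)
    exact hm1.integrable le_rfl
  -- h is in L^p(P₀)
  have hκnorm : ∀ x, ‖h x‖ ≤ ‖κ‖ := by
    intro x
    rw [Real.norm_eq_abs, Real.norm_eq_abs, abs_of_nonneg (hh x).1, abs_of_nonneg hκ0]
    exact (hh x).2
  have hhLp : MemLp h p P₀ :=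
    (memLp_const κ).of_le hhm.aestronglyMeasurable (ae_of_all _ hκnorm)
  -- h * v is in L^p(P₀)
  have hhvLp : MemLp (fun x => h x * v x) p P₀ := by
    refine hv.of_le (hhm.aestronglyMeasurable.mul hv.1) (ae_of_all _ fun x => ?_)
    rw [Real.norm_eq_abs, Real.norm_eq_abs, abs_mul, abs_of_nonneg (hh x).1]
    calc h x * |v x| ≤ 1 * |v x| := by
          apply mul_le_mul_of_nonneg_right ((hh x).2.trans hκ1) (abs_nonneg _)
      _ = |v x| := one_mul _
  -- integral identity for any suitable probability measure
  have key_eq : ∀ (ν : Measure X), IsProbabilityMeasure ν → ν ≪ P₀ →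
      MemLp (fun x => (ν.rnDeriv P₀ x).toReal) q P₀ →
      ∫ x, v x ∂(ν.withDensity fun x => ENNReal.ofReal (1 + h x - ∫ y, h y ∂ν))
        = ∫ x, v x ∂ν + ∫ x, h x * v x ∂ν - (∫ y, h y ∂ν) * ∫ x, v x ∂ν := by
    intro ν hνP hν hνd
    haveI := hνP
    set c : ℝ := ∫ y, h y ∂ν with hc
    have hint_h : Integrable h ν := by
      refine (integrable_const κ).mono' hhm.aestronglyMeasurable (ae_of_all _ ?_)
      intro x
      rw [Real.norm_eq_abs, abs_of_nonneg (hh x).1]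
      exact (hh x).2
    have hc1 : c ≤ 1 := by
      have : c ≤ ∫ _, κ ∂ν := integral_mono hint_h (integrable_const κ) fun x => (hh x).2
      simpa using this.trans (by simp [hκ1])
    have hnonneg : ∀ x, 0 ≤ 1 + h x - c := fun x => by
      have := (hh x).1; linarith
    have hmeas : Measurable fun x => (1 + h x - c).toNNReal :=
      ((measurable_const.add hhm).sub measurable_const).real_toNNReal
    have hden : (fun x => ENNReal.ofReal (1 + h x - c))
        = fun x => ((fun x => (1 + h x - c).toNNReal) x : ℝ≥0∞) := rfl
    rw [hden, integral_withDensity_eq_integral_smul hmeas]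
    have hsmul : ∀ x, ((1 + h x - c).toNNReal : ℝ≥0) • v x = v x + h x * v x - c * v x := by
      intro x
      rw [NNReal.smul_def, Real.coe_toNNReal _ (hnonneg x)]
      rw [smul_eq_mul]
      ring
    simp_rw [hsmul]
    have hiv : Integrable v ν := key_int ν inferInstance hν hνd v hv
    have hihv : Integrable (fun x => h x * v x) ν := key_int ν inferInstance hν hνd _ hhvLp
    rw [integral_sub (f := fun x => v x + h x * v x) (g := fun x => c * v x)
        (hiv.add hihv) (hiv.const_mul c), integral_add hiv hihv, integral_const_mul]
  -- rewrite both sides via the identity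
  have hrw : ∀ k, ∫ x, v x ∂((ms k).withDensity
      fun x => ENNReal.ofReal (1 + h x - ∫ y, h y ∂(ms k)))
      = ∫ x, v x ∂(ms k) + ∫ x, h x * v x ∂(ms k)
        - (∫ y, h y ∂(ms k)) * ∫ x, v x ∂(ms k) :=
    fun k => key_eq (ms k) (hms k) (hacs k) (hds k)
  rw [key_eq m inferInstance hac hd]
  simp_rw [hrw]
  exact ((hconv v hv).add (hconv _ hhvLp)).sub ((hconv h hhLp).mul (hconv v hv))
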